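/- The function $(F,Y) \mapsto \operatorname{tr}(F Y^{-1/2} F^\top)$ is jointly convex on $\mathbb{R}^{3\times 3} \times \mathcal{S}^3_{>0}$, where $\mathcal{S}^3_{>0}$ is the set of symmetric positive-definite $3\times 3$ real matrices, and for each fixed $Y\in\mathcal{S}^3_{>0}$ it is strictly convex in $F$. -/

import Mathlib

open Matrix Set

section Aux
set_option linter.unusedSectionVars false
open Matrix
variable {n : Type*} [Fintype n] [DecidableEq n]

noncomputable def Matrix.PosSemidef.sqrt {A : Matrix n n ℝ} (h : A.PosSemidef) : Matrix n n ℝ :=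
  h.1.eigenvectorUnitary.1 * diagonal ((↑) ∘ (√·) ∘ h.1.eigenvalues) *
      (star h.1.eigenvectorUnitary : Matrix n n ℝ)

open scoped MatrixOrder in
theorem Matrix.PosSemidef.sqrt_eq_cfc' {A : Matrix n n ℝ} (h : A.PosSemidef) :
    h.sqrt = CFC.sqrt A := by
  rw [CFC.sqrt_eq_real_sqrt A h.nonneg, cfcₙ_eq_cfc (hf := Real.continuous_sqrt.continuousOn) (hf0 := Real.sqrt_zero), h.1.cfc_eq, IsHermitian.cfc, Unitary.conjStarAlgAut_apply]
  rfl

open scoped MatrixOrder in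
theorem Matrix.PosSemidef.posSemidef_sqrt {A : Matrix n n ℝ} (h : A.PosSemidef) :
    h.sqrt.PosSemidef := by
  rw [h.sqrt_eq_cfc']; exact (CFC.sqrt_nonneg A).posSemidef

open scoped MatrixOrder in
theorem Matrix.PosSemidef.sqrt_mul_self {A : Matrix n n ℝ} (h : A.PosSemidef) :
    h.sqrt * h.sqrt = A := by
  rw [h.sqrt_eq_cfc']; exact CFC.sqrt_mul_sqrt_self A h.nonneg

open scoped MatrixOrder in
theorem Matrix.PosSemidef.eq_sqrt_of_sq_eq {A B : Matrix n n ℝ} (hA : A.PosSemidef)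
    (hB : B.PosSemidef) (hAB : A ^ 2 = B) : A = hB.sqrt := by
  rw [hB.sqrt_eq_cfc', ← hAB, CFC.sqrt_sq A hA.nonneg]

private lemma symm_of_herm {M : Matrix n n ℝ} (hM : M.IsHermitian) : Mᵀ = M := by
  rw [← Matrix.conjTranspose_eq_transpose_of_trivial]; exact hM

private lemma trace_form (X M : Matrix n n ℝ) :
    (X * M * Xᵀ).trace = ∑ i, X i ⬝ᵥ (M *ᵥ X i) := by
  simp only [Matrix.trace, Matrix.diag, Matrix.mul_apply, Matrix.transpose_apply,
    dotProduct, Matrix.mulVec, Finset.mul_sum, Finset.sum_mul]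
  refine Finset.sum_congr rfl fun i _ => ?_
  rw [Finset.sum_comm]
  exact Finset.sum_congr rfl fun j _ => Finset.sum_congr rfl fun k _ => by ring

private lemma trace_conj_nonneg {M : Matrix n n ℝ} (hM : M.PosSemidef) (X : Matrix n n ℝ) :
    0 ≤ (X * M * Xᵀ).trace := by
  rw [trace_form]
  exact Finset.sum_nonneg fun i _ => by simpa using hM.dotProduct_mulVec_nonneg (X i)

private lemma trace_conj_pos {M : Matrix n n ℝ} (hM : M.PosDef) {X : Matrix n n ℝ} (hX : X ≠ 0) :
    0 < (X * M * Xᵀ).trace := by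
  rw [trace_form]
  obtain ⟨i, hi⟩ : ∃ i, X i ≠ 0 := by
    by_contra h
    push_neg at h
    exact hX (by ext i j; simpa using congrFun (h i) j)
  refine Finset.sum_pos' (fun j _ => ?_) ⟨i, Finset.mem_univ i, ?_⟩
  · simpa using hM.posSemidef.dotProduct_mulVec_nonneg (X j)
  · simpa using hM.dotProduct_mulVec_pos hi

/-- completing the square -/
private lemma key {A : Matrix n n ℝ} (hA : A.PosDef) (F X : Matrix n n ℝ) :
    (F * Xᵀ).trace + (X * Fᵀ).trace ≤ (X * A * Xᵀ).trace + (F * A⁻¹ * Fᵀ).trace := by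
  have hdet : IsUnit A.det := hA.det_pos.ne'.isUnit
  have hAi : A⁻¹ᵀ = A⁻¹ := by
    rw [Matrix.transpose_nonsing_inv, symm_of_herm hA.isHermitian]
  have h0 : 0 ≤ ((X - F * A⁻¹) * A * (X - F * A⁻¹)ᵀ).trace :=
    trace_conj_nonneg hA.posSemidef _
  have hexp : ((X - F * A⁻¹) * A * (X - F * A⁻¹)ᵀ)
      = X * A * Xᵀ - X * Fᵀ - F * Xᵀ + F * A⁻¹ * Fᵀ := by
    rw [Matrix.transpose_sub, Matrix.transpose_mul, hAi]
    have h2 : F * A⁻¹ * A = F := Matrix.nonsing_inv_mul_cancel_right _ _ hdet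
    have h1 : A * (A⁻¹ * Fᵀ) = Fᵀ := Matrix.mul_nonsing_inv_cancel_left _ _ hdet
    rw [Matrix.sub_mul, Matrix.mul_sub, Matrix.sub_mul, h2, Matrix.sub_mul,
      Matrix.mul_assoc X A (A⁻¹ * Fᵀ), h1, Matrix.mul_assoc X A Xᵀ,
      ← Matrix.mul_assoc F A⁻¹ Fᵀ]
    abel
  rw [hexp] at h0
  simp only [Matrix.trace_sub, Matrix.trace_add] at h0
  linarith

/-- sqrt is operator monotone -/
private lemma sqrt_mono {A B : Matrix n n ℝ} (hA : A.PosSemidef) (hB : B.PosSemidef)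
    (hAB : (B - A).PosSemidef) : (hB.sqrt - hA.sqrt).PosSemidef := by
  set SA := hA.sqrt with hSA
  set SB := hB.sqrt with hSB
  have hSAp : SA.PosSemidef := hA.posSemidef_sqrt
  have hSBp : SB.PosSemidef := hB.posSemidef_sqrt
  have hT : (SB - SA).IsHermitian := hSBp.1.sub hSAp.1
  refine hT.posSemidef_iff_eigenvalues_nonneg.mpr fun i => show 0 ≤ hT.eigenvalues i from ?_
  by_contra hlt
  push_neg at hlt
  set t := hT.eigenvalues i with ht
  set v : n → ℝ := ⇑(hT.eigenvectorBasis i) with hv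
  have hv0 : v ≠ 0 := by
    intro h
    refine hT.eigenvectorBasis.orthonormal.ne_zero i ?_
    ext j
    exact congrFun h j
  have hveq : (SB - SA) *ᵥ v = t • v := hT.mulVec_eigenvectorBasis i
  have hid : B - A = SB * (SB - SA) + (SB - SA) * SA := by
    rw [Matrix.mul_sub, Matrix.sub_mul, hB.sqrt_mul_self, hA.sqrt_mul_self]
    abel
  have hq : (0:ℝ) ≤ v ⬝ᵥ ((B - A) *ᵥ v) := by simpa using hAB.dotProduct_mulVec_nonneg v
  have hqA : (0:ℝ) ≤ v ⬝ᵥ (SA *ᵥ v) := by simpa using hSAp.dotProduct_mulVec_nonneg v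
  have hqB : (0:ℝ) ≤ v ⬝ᵥ (SB *ᵥ v) := by simpa using hSBp.dotProduct_mulVec_nonneg v
  have hcalc : v ⬝ᵥ ((B - A) *ᵥ v) = t * (v ⬝ᵥ (SB *ᵥ v) + v ⬝ᵥ (SA *ᵥ v)) := by
    have h2 : v ⬝ᵥ ((SB - SA) *ᵥ (SA *ᵥ v)) = t * (v ⬝ᵥ (SA *ᵥ v)) := by
      rw [dotProduct_mulVec]
      have hvm : v ᵥ* (SB - SA) = t • v := by
        rw [← symm_of_herm hT, Matrix.vecMul_transpose, hveq]
      rw [hvm, smul_dotProduct, smul_eq_mul]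
    rw [hid, Matrix.add_mulVec, dotProduct_add, ← Matrix.mulVec_mulVec, hveq,
      Matrix.mulVec_smul, dotProduct_smul, ← Matrix.mulVec_mulVec, h2, smul_eq_mul]
    ring
  have hsum : v ⬝ᵥ (SB *ᵥ v) + v ⬝ᵥ (SA *ᵥ v) ≤ 0 := by
    by_contra hpos
    push_neg at hpos
    nlinarith [hq, hcalc]
  have hzA : v ⬝ᵥ (SA *ᵥ v) = 0 := le_antisymm (by linarith) hqA
  have hzB : v ⬝ᵥ (SB *ᵥ v) = 0 := le_antisymm (by linarith) hqB
  have hkA : SA *ᵥ v = 0 := (hSAp.dotProduct_mulVec_zero_iff v).mp (by simpa using hzA)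
  have hkB : SB *ᵥ v = 0 := (hSBp.dotProduct_mulVec_zero_iff v).mp (by simpa using hzB)
  have : t • v = 0 := by rw [← hveq, Matrix.sub_mulVec, hkA, hkB, sub_zero]
  exact hv0 (by simpa [smul_eq_zero, hlt.ne] using this)

private lemma psd_smul {M : Matrix n n ℝ} (hM : M.PosSemidef) {a : ℝ} (ha : 0 ≤ a) :
    (a • M).PosSemidef := by
  refine PosSemidef.of_dotProduct_mulVec_nonneg (show (a • M)ᴴ = a • M by rw [Matrix.conjTranspose_smul, star_trivial, hM.1])
    fun x => ?_
  rw [Matrix.smul_mulVec, dotProduct_smul]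
  exact smul_nonneg ha (hM.dotProduct_mulVec_nonneg x)

private lemma pd_smul {M : Matrix n n ℝ} (hM : M.PosDef) {a : ℝ} (ha : 0 < a) :
    (a • M).PosDef := by
  refine PosDef.of_dotProduct_mulVec_pos (show (a • M)ᴴ = a • M by rw [Matrix.conjTranspose_smul, star_trivial, hM.1])
    fun x hx => ?_
  rw [Matrix.smul_mulVec, dotProduct_smul]
  exact smul_pos ha (hM.dotProduct_mulVec_pos hx)

private lemma pd_combo {Y Z : Matrix n n ℝ} (hY : Y.PosDef) (hZ : Z.PosDef) {a b : ℝ}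
    (ha : 0 ≤ a) (hb : 0 ≤ b) (hab : a + b = 1) : (a • Y + b • Z).PosDef := by
  rcases eq_or_lt_of_le ha with ha0 | ha0
  · simp only [← ha0, zero_smul, zero_add]
    have : b = 1 := by linarith
    simpa [this] using hZ
  rcases eq_or_lt_of_le hb with hb0 | hb0
  · have : a = 1 := by linarith
    simpa [← hb0, this] using hY
  exact (pd_smul hY ha0).add (pd_smul hZ hb0)

/-- the sqrt of a positive definite matrix is positive definite -/
private lemma pd_sqrt {Y : Matrix n n ℝ} (hY : Y.PosDef) : (hY.posSemidef.sqrt).PosDef := by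
  set S := hY.posSemidef.sqrt with hS
  have hSp : S.PosSemidef := hY.posSemidef.posSemidef_sqrt
  have hdet : S.det ≠ 0 := by
    intro h
    have : Y.det = 0 := by
      rw [← hY.posSemidef.sqrt_mul_self, Matrix.det_mul, h, mul_zero]
    exact hY.det_pos.ne' this
  refine PosDef.of_dotProduct_mulVec_pos hSp.1 fun x hx => ?_
  rcases lt_or_eq_of_le (hSp.dotProduct_mulVec_nonneg x) with h | h
  · exact h
  exfalso
  have hk : S *ᵥ x = 0 := (hSp.dotProduct_mulVec_zero_iff x).mp h.symm
  have hinj : Function.Injective (S.mulVec) :=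
    Matrix.mulVec_injective_iff_isUnit.mpr (Matrix.isUnit_iff_isUnit_det _ |>.2 hdet.isUnit)
  exact hx (hinj (by simpa using hk))

/-- concavity of matrix sqrt -/
private lemma sqrt_concave {Y Z : Matrix n n ℝ} (hY : Y.PosDef) (hZ : Z.PosDef) {a b : ℝ}
    (ha : 0 ≤ a) (hb : 0 ≤ b) (hab : a + b = 1)
    (hC : (a • Y + b • Z).PosDef) :
    ((hC.posSemidef.sqrt) - (a • hY.posSemidef.sqrt + b • hZ.posSemidef.sqrt)).PosSemidef := by
  set SY := hY.posSemidef.sqrt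
  set SZ := hZ.posSemidef.sqrt
  have hSYp : SY.PosSemidef := hY.posSemidef.posSemidef_sqrt
  have hSZp : SZ.PosSemidef := hZ.posSemidef.posSemidef_sqrt
  set S := a • SY + b • SZ with hSdef
  have hSp : S.PosSemidef := (psd_smul hSYp ha).add (psd_smul hSZp hb)
  have hSS : (S * S).PosSemidef := by
    have := Matrix.posSemidef_conjTranspose_mul_self S
    rwa [Matrix.conjTranspose_eq_transpose_of_trivial, symm_of_herm hSp.1] at this
  have hdiff : (a • Y + b • Z) - S * S = (a * b) • ((SY - SZ) * (SY - SZ)) := by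
    have eY : SY * SY = Y := hY.posSemidef.sqrt_mul_self
    have eZ : SZ * SZ = Z := hZ.posSemidef.sqrt_mul_self
    rw [hSdef, ← eY, ← eZ]
    have hb' : b = 1 - a := by linarith
    subst hb'
    simp only [Matrix.add_mul, Matrix.mul_add, Matrix.sub_mul, Matrix.mul_sub,
      Matrix.smul_mul, Matrix.mul_smul, smul_smul, smul_sub, smul_add]
    module
  have hle : ((a • Y + b • Z) - S * S).PosSemidef := by
    rw [hdiff]
    refine psd_smul ?_ (mul_nonneg ha hb)
    have := Matrix.posSemidef_conjTranspose_mul_self (SY - SZ)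
    rwa [Matrix.conjTranspose_eq_transpose_of_trivial,
      symm_of_herm (hSYp.1.sub hSZp.1)] at this
  have hmono := sqrt_mono hSS hC.posSemidef hle
  have hSsq : (hSS).sqrt = S := (hSp.eq_sqrt_of_sq_eq hSS (by rw [pow_two])).symm
  rwa [hSsq] at hmono

/-- the main inequality: joint convexity of `(F, Y) ↦ tr (F (√Y)⁻¹ Fᵀ)` -/
private lemma main_ineq {Y Z : Matrix n n ℝ} (hY : Y.PosDef) (hZ : Z.PosDef)
    (F G : Matrix n n ℝ) {a b : ℝ} (ha : 0 < a) (hb : 0 < b) (hab : a + b = 1)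
    (hC : (a • Y + b • Z).PosDef) :
    ((a • F + b • G) * (hC.posSemidef.sqrt)⁻¹ * (a • F + b • G)ᵀ).trace ≤
      a * (F * (hY.posSemidef.sqrt)⁻¹ * Fᵀ).trace
        + b * (G * (hZ.posSemidef.sqrt)⁻¹ * Gᵀ).trace := by
  set SY := hY.posSemidef.sqrt with hSYdef
  set SZ := hZ.posSemidef.sqrt with hSZdef
  set SC := hC.posSemidef.sqrt with hSCdef
  have hSYpd : SY.PosDef := pd_sqrt hY
  have hSZpd : SZ.PosDef := pd_sqrt hZ
  have hSCpd : SC.PosDef := pd_sqrt hC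
  have hdet : IsUnit SC.det := hSCpd.det_pos.ne'.isUnit
  have hSCi : SC⁻¹ᵀ = SC⁻¹ := by
    rw [Matrix.transpose_nonsing_inv, symm_of_herm hSCpd.isHermitian]
  set H := a • F + b • G with hHdef
  set X := H * SC⁻¹ with hXdef
  have e1 : X * SC * Xᵀ = H * SC⁻¹ * Hᵀ := by
    rw [hXdef, Matrix.transpose_mul, hSCi, Matrix.mul_assoc (H * SC⁻¹) SC (SC⁻¹ * Hᵀ),
      Matrix.mul_nonsing_inv_cancel_left _ _ hdet, Matrix.mul_assoc]
  have e2 : H * Xᵀ = H * SC⁻¹ * Hᵀ := by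
    rw [hXdef, Matrix.transpose_mul, hSCi, Matrix.mul_assoc]
  have e3 : (X * Hᵀ).trace = (H * Xᵀ).trace := by
    rw [← Matrix.trace_transpose, Matrix.transpose_mul, Matrix.transpose_transpose]
  -- step 1: replace SC by S := a • SY + b • SZ
  have hconc := sqrt_concave hY hZ ha.le hb.le hab hC
  have step1 : 0 ≤ (X * (SC - (a • SY + b • SZ)) * Xᵀ).trace := trace_conj_nonneg hconc X
  have step1' : (X * (a • SY + b • SZ) * Xᵀ).trace ≤ (X * SC * Xᵀ).trace := by
    have : X * (SC - (a • SY + b • SZ)) * Xᵀ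
        = X * SC * Xᵀ - X * (a • SY + b • SZ) * Xᵀ := by
      rw [Matrix.mul_sub, Matrix.sub_mul]
    rw [this, Matrix.trace_sub] at step1
    linarith
  -- step 2: the two completing-the-square estimates
  have kY := key hSYpd F X
  have kZ := key hSZpd G X
  -- linear expansions
  have lin1 : (H * Xᵀ).trace = a * (F * Xᵀ).trace + b * (G * Xᵀ).trace := by
    rw [hHdef, Matrix.add_mul, Matrix.smul_mul, Matrix.smul_mul, Matrix.trace_add,
      Matrix.trace_smul, Matrix.trace_smul, smul_eq_mul, smul_eq_mul]
  have lin2 : (X * Hᵀ).trace = a * (X * Fᵀ).trace + b * (X * Gᵀ).trace := by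
    rw [hHdef, Matrix.transpose_add, Matrix.transpose_smul, Matrix.transpose_smul,
      Matrix.mul_add, Matrix.mul_smul, Matrix.mul_smul, Matrix.trace_add,
      Matrix.trace_smul, Matrix.trace_smul, smul_eq_mul, smul_eq_mul]
  have lin3 : (X * (a • SY + b • SZ) * Xᵀ).trace
      = a * (X * SY * Xᵀ).trace + b * (X * SZ * Xᵀ).trace := by
    rw [Matrix.mul_add, Matrix.mul_smul, Matrix.mul_smul, Matrix.add_mul,
      Matrix.smul_mul, Matrix.smul_mul, Matrix.trace_add, Matrix.trace_smul,
      Matrix.trace_smul, smul_eq_mul, smul_eq_mul]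
  -- put everything together
  have main : (H * SC⁻¹ * Hᵀ).trace
      ≤ a * (F * SY⁻¹ * Fᵀ).trace + b * (G * SZ⁻¹ * Gᵀ).trace := by
    have temp : (H * SC⁻¹ * Hᵀ).trace
        = (H * Xᵀ).trace + (X * Hᵀ).trace - (X * SC * Xᵀ).trace := by
      rw [e1, e2, e3]; ring
    rw [temp]
    have t1 : (H * Xᵀ).trace + (X * Hᵀ).trace - (X * SC * Xᵀ).trace
        ≤ (H * Xᵀ).trace + (X * Hᵀ).trace - (X * (a • SY + b • SZ) * Xᵀ).trace := by
      linarith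
    refine t1.trans ?_
    rw [lin1, lin2, lin3]
    nlinarith [kY, kZ, ha.le, hb.le]
  exact main

private lemma strict_aux {M : Matrix n n ℝ} (hM : M.PosDef) {F G : Matrix n n ℝ}
    (hFG : F ≠ G) {a b : ℝ} (ha : 0 < a) (hb : 0 < b) (hab : a + b = 1) :
    ((a • F + b • G) * M * (a • F + b • G)ᵀ).trace
      < a * (F * M * Fᵀ).trace + b * (G * M * Gᵀ).trace := by
  have e1 : ((a • F + b • G) * M * (a • F + b • G)ᵀ).trace
      = a^2 * (F * M * Fᵀ).trace + a*b * (F * M * Gᵀ).trace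
        + a*b * (G * M * Fᵀ).trace + b^2 * (G * M * Gᵀ).trace := by
    simp only [Matrix.transpose_add, Matrix.transpose_smul, Matrix.add_mul, Matrix.mul_add,
      Matrix.smul_mul, Matrix.mul_smul, smul_smul, Matrix.trace_add, Matrix.trace_smul,
      smul_eq_mul]
    ring
  have e2 : ((F - G) * M * (F - G)ᵀ).trace
      = (F * M * Fᵀ).trace - (F * M * Gᵀ).trace - (G * M * Fᵀ).trace
        + (G * M * Gᵀ).trace := by
    simp only [Matrix.transpose_sub, Matrix.sub_mul, Matrix.mul_sub, Matrix.trace_sub]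
    ring
  have e3 : 0 < ((F - G) * M * (F - G)ᵀ).trace :=
    trace_conj_pos hM (sub_ne_zero.mpr hFG)
  have key := mul_pos (mul_pos ha hb) e3
  rw [e2] at key
  rw [e1]
  have hb' : b = 1 - a := by linarith
  subst hb'
  nlinarith [key]

end Aux

open scoped Classical in
/-- The inverse of the unique symmetric positive-semidefinite square root of `Y`
(junk value `0` when `Y` is not positive semidefinite). -/
noncomputable def invSqrt (Y : Matrix (Fin 3) (Fin 3) ℝ) : Matrix (Fin 3) (Fin 3) ℝ :=
  if h : Y.PosSemidef then
    (h.1.eigenvectorUnitary.1 * diagonal ((↑) ∘ (√·) ∘ h.1.eigenvalues) *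
      (star h.1.eigenvectorUnitary : Matrix (Fin 3) (Fin 3) ℝ))⁻¹ else 0

private lemma invSqrt_eq {Y : Matrix (Fin 3) (Fin 3) ℝ} (hY : Y.PosDef) :
    invSqrt Y = (hY.posSemidef.sqrt)⁻¹ := by
  rw [invSqrt, dif_pos hY.posSemidef]
  rfl

/-- The function `(F, Y) ↦ tr(F Y^{-1/2} Fᵀ)` is jointly convex on
`ℝ^{3×3} × 𝒮³₊` and, for each fixed positive-definite `Y`, strictly convex in `F`. -/
theorem stmt7 :
    ConvexOn ℝ {P : Matrix (Fin 3) (Fin 3) ℝ × Matrix (Fin 3) (Fin 3) ℝ | P.2.PosDef}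
      (fun P => (P.1 * invSqrt P.2 * P.1ᵀ).trace) ∧
    ∀ Y : Matrix (Fin 3) (Fin 3) ℝ, Y.PosDef →
      StrictConvexOn ℝ (univ : Set (Matrix (Fin 3) (Fin 3) ℝ))
        (fun F => (F * invSqrt Y * Fᵀ).trace) := by
  constructor
  · constructor
    · -- the domain is convex
      intro P hP Q hQ a b ha hb hab
      show ((a • P + b • Q).2).PosDef
      simpa using pd_combo hP hQ ha hb hab
    · intro P hP Q hQ a b ha hb hab
      rcases eq_or_lt_of_le ha with ha0 | ha0
      · simp [← ha0, show b = 1 by linarith]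
      rcases eq_or_lt_of_le hb with hb0 | hb0
      · simp [← hb0, show a = 1 by linarith]
      have hY : (P.2).PosDef := hP
      have hZ : (Q.2).PosDef := hQ
      have hC : (a • P.2 + b • Q.2).PosDef := pd_combo hY hZ ha hb hab
      have goal := main_ineq hY hZ P.1 Q.1 ha0 hb0 hab hC
      rw [← invSqrt_eq hY, ← invSqrt_eq hZ, ← invSqrt_eq hC] at goal
      simpa [smul_eq_mul] using goal
  · intro Y hY
    have hSYpd : (hY.posSemidef.sqrt).PosDef := pd_sqrt hY
    have hMpd : (invSqrt Y).PosDef := by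
      rw [invSqrt_eq hY]; exact hSYpd.inv
    refine ⟨convex_univ, fun F _ G _ hFG a b ha hb hab => ?_⟩
    have := strict_aux hMpd hFG ha hb hab
    simpa [smul_eq_mul] using this
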